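/- Change-of-measure lemma underlying the equivalence of all representations of the mediation functional: for every function h : 𝒮 × 𝒳 → ℝ, E[ 1{E=1} · P(M=M|E=0,X)·h(M,X) / ( P(E=1|X)·P(M=M|E=1,X) ) ] = E[ (1{E=0}/P(E=0|X)) · h(M,X) ] = Σ_{m∈𝒮, x∈𝒳, P(X=x)>0} h(m,x)·P(M=m|E=0,X=x)·P(X=x). -/

import Mathlib

open MeasureTheory ProbabilityTheory

/-- Conditional probability of `B` given the event `A`: `P(B ∩ A) / P(A)`. -/
noncomputable def cP {Ω : Type*} [MeasurableSpace Ω] (μ : Measure Ω) (B A : Set Ω) : ℝ :=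
  (μ (B ∩ A)).toReal / (μ A).toReal

/-- Conditional expectation of `Y` given the event `A`: `E[Y·1_A] / P(A)`. -/
noncomputable def cE {Ω : Type*} [MeasurableSpace Ω] (μ : Measure Ω) (Y : Ω → ℝ) (A : Set Ω) : ℝ :=
  (∫ ω in A, Y ω ∂μ) / (μ A).toReal

lemma cancel_aux (A q h D x : ℝ) (hA : A ≠ 0) (hD : D ≠ 0) (hx : x ≠ 0) :
    A * (q * h / ((D / x) * (A / D))) = h * q * x := by
  field_simp

lemma integral_comp_fin {Ω T : Type*} [MeasurableSpace Ω] [Fintype T] [MeasurableSpace T]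
    [MeasurableSingletonClass T] (μ : Measure Ω) [IsFiniteMeasure μ]
    (Y : Ω → T) (hY : Measurable Y) (g : T → ℝ) :
    ∫ ω, g (Y ω) ∂μ = ∑ t, (μ (Y ⁻¹' {t})).toReal * g t := by
  rw [← integral_map hY.aemeasurable (measurable_of_countable g).aestronglyMeasurable,
    integral_fintype]
  · simp [measureReal_def, Measure.map_apply hY (measurableSet_singleton _), smul_eq_mul]
  · exact .of_finite

open Classical in
/-- change-of-measure lemma: for every `h : 𝒮 × 𝒳 → ℝ`,
`E[1{E=1}·P(M=M|E=0,X)·h(M,X)/(P(E=1|X)·P(M=M|E=1,X))]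
= E[(1{E=0}/P(E=0|X))·h(M,X)] = Σ_{m,x:P(X=x)>0} h(m,x)·P(M=m|E=0,X=x)·P(X=x)`. -/
theorem mediation_change_of_measure
    {Ω 𝒳 𝒮 : Type*} [MeasurableSpace Ω] [Fintype 𝒳] [Fintype 𝒮]
    [MeasurableSpace 𝒳] [MeasurableSingletonClass 𝒳]
    [MeasurableSpace 𝒮] [MeasurableSingletonClass 𝒮]
    (μ : Measure Ω) [IsProbabilityMeasure μ]
    (X : Ω → 𝒳) (M : Ω → 𝒮) (E : Ω → Bool)
    (hX : Measurable X) (hM : Measurable M) (hE : Measurable E)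
    (hposE : ∀ (e : Bool) (x : 𝒳), μ (X ⁻¹' {x}) ≠ 0 → μ (E ⁻¹' {e} ∩ X ⁻¹' {x}) ≠ 0)
    (hposM : ∀ (m : 𝒮) (e : Bool) (x : 𝒳), μ (X ⁻¹' {x}) ≠ 0 →
      μ (M ⁻¹' {m} ∩ E ⁻¹' {e} ∩ X ⁻¹' {x}) ≠ 0) :
    ∀ h : 𝒮 × 𝒳 → ℝ,
      (∫ ω, (if E ω then (1:ℝ) else 0) *
          cP μ (M ⁻¹' {M ω}) (E ⁻¹' {false} ∩ X ⁻¹' {X ω}) * h (M ω, X ω) /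
          (cP μ (E ⁻¹' {true}) (X ⁻¹' {X ω}) *
            cP μ (M ⁻¹' {M ω}) (E ⁻¹' {true} ∩ X ⁻¹' {X ω})) ∂μ =
        ∫ ω, (if E ω then (0:ℝ) else 1) / cP μ (E ⁻¹' {false}) (X ⁻¹' {X ω}) *
          h (M ω, X ω) ∂μ) ∧
      (∫ ω, (if E ω then (0:ℝ) else 1) / cP μ (E ⁻¹' {false}) (X ⁻¹' {X ω}) *
          h (M ω, X ω) ∂μ =
        ∑ m : 𝒮, ∑ x ∈ Finset.univ.filter (fun x => μ (X ⁻¹' {x}) ≠ 0),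
          h (m, x) * cP μ (M ⁻¹' {m}) (E ⁻¹' {false} ∩ X ⁻¹' {x}) *
            (μ (X ⁻¹' {x})).toReal) := by
  intro h
  -- the joint random variable
  set Y : Ω → Bool × 𝒮 × 𝒳 := fun ω => (E ω, M ω, X ω) with hYdef
  have hY : Measurable Y := hE.prodMk (hM.prodMk hX)
  have hset : ∀ (e : Bool) (m : 𝒮) (x : 𝒳),
      Y ⁻¹' {(e, m, x)} = M ⁻¹' {m} ∩ E ⁻¹' {e} ∩ X ⁻¹' {x} := by
    intro e m x
    ext ω
    simp [hYdef, Prod.ext_iff, Set.mem_preimage, and_assoc]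
    tauto
  -- the common value
  set S : ℝ := ∑ m : 𝒮, ∑ x : 𝒳, (if μ (X ⁻¹' {x}) ≠ 0 then
      h (m, x) * cP μ (M ⁻¹' {m}) (E ⁻¹' {false} ∩ X ⁻¹' {x}) *
        (μ (X ⁻¹' {x})).toReal else 0) with hSdef
  have hRHS : (∑ m : 𝒮, ∑ x ∈ Finset.univ.filter (fun x => μ (X ⁻¹' {x}) ≠ 0),
      h (m, x) * cP μ (M ⁻¹' {m}) (E ⁻¹' {false} ∩ X ⁻¹' {x}) *
        (μ (X ⁻¹' {x})).toReal) = S := by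
    rw [hSdef]
    refine Finset.sum_congr rfl fun m _ => ?_
    rw [Finset.sum_filter]
  have htr : ∀ (s : Set Ω), s ⊆ Set.univ → (μ s) ≠ ⊤ := fun s _ => measure_ne_top μ s
  -- second integral equals S
  have h2 : (∫ ω, (if E ω then (0:ℝ) else 1) / cP μ (E ⁻¹' {false}) (X ⁻¹' {X ω}) *
      h (M ω, X ω) ∂μ) = S := by
    have key : (∫ ω, (if E ω then (0:ℝ) else 1) / cP μ (E ⁻¹' {false}) (X ⁻¹' {X ω}) *
        h (M ω, X ω) ∂μ) = ∑ t : Bool × 𝒮 × 𝒳, (μ (Y ⁻¹' {t})).toReal *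
          ((if t.1 then (0:ℝ) else 1) / cP μ (E ⁻¹' {false}) (X ⁻¹' {t.2.2}) *
            h (t.2.1, t.2.2)) :=
      integral_comp_fin μ Y hY (fun t =>
        (if t.1 then (0:ℝ) else 1) / cP μ (E ⁻¹' {false}) (X ⁻¹' {t.2.2}) * h (t.2.1, t.2.2))
    rw [key, hSdef, Fintype.sum_prod_type, Fintype.sum_bool]
    simp only [Fintype.sum_prod_type, reduceIte, Bool.false_eq_true, if_true, if_false, zero_div, zero_mul, mul_zero,
      Finset.sum_const_zero, zero_add, add_zero, one_div]
    refine Finset.sum_congr rfl fun m _ => Finset.sum_congr rfl fun x _ => ?_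
    rw [hset]
    by_cases hx : μ (X ⁻¹' {x}) = 0
    · have h0 : μ (M ⁻¹' {m} ∩ E ⁻¹' {false} ∩ X ⁻¹' {x}) = 0 :=
        measure_mono_null Set.inter_subset_right hx
      simp [h0, hx]
    · rw [if_pos hx]
      have hax : (μ (X ⁻¹' {x})).toReal ≠ 0 :=
        ENNReal.toReal_ne_zero.mpr ⟨hx, measure_ne_top μ _⟩
      have haef : (μ (E ⁻¹' {false} ∩ X ⁻¹' {x})).toReal ≠ 0 :=
        ENNReal.toReal_ne_zero.mpr ⟨hposE false x hx, measure_ne_top μ _⟩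
      simp only [cP, Set.inter_assoc]
      field_simp
  refine ⟨?_, h2.trans hRHS.symm⟩
  rw [h2]
  -- first integral equals S
  have key : (∫ ω, (if E ω then (1:ℝ) else 0) *
      cP μ (M ⁻¹' {M ω}) (E ⁻¹' {false} ∩ X ⁻¹' {X ω}) * h (M ω, X ω) /
      (cP μ (E ⁻¹' {true}) (X ⁻¹' {X ω}) *
        cP μ (M ⁻¹' {M ω}) (E ⁻¹' {true} ∩ X ⁻¹' {X ω})) ∂μ) =
      ∑ t : Bool × 𝒮 × 𝒳, (μ (Y ⁻¹' {t})).toReal *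
        ((if t.1 then (1:ℝ) else 0) *
          cP μ (M ⁻¹' {t.2.1}) (E ⁻¹' {false} ∩ X ⁻¹' {t.2.2}) * h (t.2.1, t.2.2) /
          (cP μ (E ⁻¹' {true}) (X ⁻¹' {t.2.2}) *
            cP μ (M ⁻¹' {t.2.1}) (E ⁻¹' {true} ∩ X ⁻¹' {t.2.2}))) :=
    integral_comp_fin μ Y hY (fun t =>
      (if t.1 then (1:ℝ) else 0) *
        cP μ (M ⁻¹' {t.2.1}) (E ⁻¹' {false} ∩ X ⁻¹' {t.2.2}) * h (t.2.1, t.2.2) /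
        (cP μ (E ⁻¹' {true}) (X ⁻¹' {t.2.2}) *
          cP μ (M ⁻¹' {t.2.1}) (E ⁻¹' {true} ∩ X ⁻¹' {t.2.2})))
  rw [key, hSdef, Fintype.sum_prod_type, Fintype.sum_bool]
  simp only [Fintype.sum_prod_type, reduceIte, Bool.false_eq_true, if_true, if_false, zero_div, zero_mul, mul_zero,
    Finset.sum_const_zero, zero_add, add_zero, one_mul]
  refine Finset.sum_congr rfl fun m _ => Finset.sum_congr rfl fun x _ => ?_
  rw [hset]
  by_cases hx : μ (X ⁻¹' {x}) = 0
  · have h0 : μ (M ⁻¹' {m} ∩ E ⁻¹' {true} ∩ X ⁻¹' {x}) = 0 :=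
      measure_mono_null Set.inter_subset_right hx
    simp [h0, hx]
  · rw [if_pos hx]
    have hax : (μ (X ⁻¹' {x})).toReal ≠ 0 :=
      ENNReal.toReal_ne_zero.mpr ⟨hx, measure_ne_top μ _⟩
    have haet : (μ (E ⁻¹' {true} ∩ X ⁻¹' {x})).toReal ≠ 0 :=
      ENNReal.toReal_ne_zero.mpr ⟨hposE true x hx, measure_ne_top μ _⟩
    have hpmt : (μ (M ⁻¹' {m} ∩ (E ⁻¹' {true} ∩ X ⁻¹' {x}))).toReal ≠ 0 := by
      rw [← Set.inter_assoc]
      exact ENNReal.toReal_ne_zero.mpr ⟨hposM m true x hx, measure_ne_top μ _⟩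
    rw [Set.inter_assoc]
    exact cancel_aux _ _ _ _ _ hpmt haet hax
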